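/- Every 5×5 real symmetric matrix A whose support is exactly the adjacency pattern of the 5-cycle (a_{ij} > 0 iff i - j ≡ ±1 mod 5, a_{ij} = 0 otherwise) has exactly 3 positive eigenvalues and 2 negative eigenvalues. -/

import Mathlib

set_option maxRecDepth 10000

open Matrix

/-- For a finset of at least two positive reals, the sum of cubes is strictly less than
the cube of the sum. -/
lemma sum_cube_lt_cube_sum {ι : Type*} [DecidableEq ι] (s : Finset ι) (f : ι → ℝ)
    (hc : 2 ≤ s.card) (hf : ∀ i ∈ s, 0 < f i) :
    ∑ i ∈ s, (f i)^3 < (∑ i ∈ s, f i)^3 := by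
  have hne : s.Nonempty := Finset.card_pos.mp (by omega)
  have hs0 : 0 < ∑ i ∈ s, f i := Finset.sum_pos hf hne
  have hlt : ∀ i ∈ s, f i < ∑ j ∈ s, f j := by
    intro i hi
    have h1 : ∑ j ∈ s.erase i, f j + f i = ∑ j ∈ s, f j := Finset.sum_erase_add s f hi
    have hne' : (s.erase i).Nonempty := by
      rw [← Finset.card_pos, Finset.card_erase_of_mem hi]; omega
    have h2 : 0 < ∑ j ∈ s.erase i, f j :=
      Finset.sum_pos (fun j hj => hf j (Finset.mem_of_mem_erase hj)) hne'
    linarith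
  have step1 : ∑ i ∈ s, (f i)^3 < ∑ i ∈ s, (∑ j ∈ s, f j) * (f i)^2 := by
    apply Finset.sum_lt_sum_of_nonempty hne
    intro i hi
    have h1 := hlt i hi
    have h2 := hf i hi
    have h3 := mul_lt_mul_of_pos_right h1 (pow_pos h2 2)
    calc (f i)^3 = f i * (f i)^2 := by ring
      _ < (∑ j ∈ s, f j) * (f i)^2 := h3
  have step2 : ∑ i ∈ s, (f i)^2 < ∑ i ∈ s, (∑ j ∈ s, f j) * f i := by
    apply Finset.sum_lt_sum_of_nonempty hne
    intro i hi
    have h1 := hlt i hi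
    have h2 := hf i hi
    have h3 := mul_lt_mul_of_pos_right h1 h2
    calc (f i)^2 = f i * f i := by ring
      _ < (∑ j ∈ s, f j) * f i := h3
  have e1 : ∑ i ∈ s, (∑ j ∈ s, f j) * (f i)^2 = (∑ j ∈ s, f j) * ∑ i ∈ s, (f i)^2 :=
    (Finset.mul_sum _ _ _).symm
  have e2 : ∑ i ∈ s, (∑ j ∈ s, f j) * f i = (∑ j ∈ s, f j) * ∑ i ∈ s, f i :=
    (Finset.mul_sum _ _ _).symm
  calc ∑ i ∈ s, (f i)^3 < (∑ j ∈ s, f j) * ∑ i ∈ s, (f i)^2 := by rw [← e1]; exact step1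
    _ ≤ (∑ j ∈ s, f j) * ((∑ j ∈ s, f j) * ∑ i ∈ s, f i) := by
        apply mul_le_mul_of_nonneg_left _ hs0.le
        rw [← e2]; exact step2.le
    _ = (∑ i ∈ s, f i)^3 := by ring

/-- Five reals with vanishing sum, vanishing sum of cubes, and positive product consist of
exactly three positive and two negative numbers. -/
lemma signature_of_sums (lam : ZMod 5 → ℝ) (h1 : ∑ i, lam i = 0)
    (h3 : ∑ i, (lam i)^3 = 0) (hd : 0 < ∏ i, lam i) :
    Fintype.card {i : ZMod 5 // 0 < lam i} = 3 ∧
    Fintype.card {i : ZMod 5 // lam i < 0} = 2 := by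
  classical
  set P := Finset.univ.filter (fun i : ZMod 5 => 0 < lam i) with hPdef
  set N := Finset.univ.filter (fun i : ZMod 5 => lam i < 0) with hNdef
  have hnz : ∀ i, lam i ≠ 0 := by
    intro i h
    rw [Finset.prod_eq_zero (Finset.mem_univ i) h] at hd
    exact lt_irrefl 0 hd
  have hdisj : Disjoint P N := by
    rw [Finset.disjoint_left]
    intro a ha hb
    rw [hPdef, Finset.mem_filter] at ha
    rw [hNdef, Finset.mem_filter] at hb
    exact absurd (lt_trans ha.2 hb.2) (lt_irrefl 0)
  have hPN : P ∪ N = Finset.univ := by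
    ext i
    simp only [Finset.mem_union, hPdef, hNdef, Finset.mem_filter, Finset.mem_univ, true_and,
      iff_true]
    rcases lt_trichotomy 0 (lam i) with h | h | h
    · exact Or.inl h
    · exact absurd h.symm (hnz i)
    · exact Or.inr h
  have hcard : P.card + N.card = 5 := by
    rw [← Finset.card_union_of_disjoint hdisj, hPN]
    rfl
  have hsplit : ∀ g : ZMod 5 → ℝ, ∑ i, g i = ∑ i ∈ P, g i + ∑ i ∈ N, g i := by
    intro g
    rw [← Finset.sum_union hdisj, hPN]
  have hprodsplit : ∏ i, lam i = (∏ i ∈ P, lam i) * ∏ i ∈ N, lam i := by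
    rw [← Finset.prod_union hdisj, hPN]
  have hPmem : ∀ i ∈ P, 0 < lam i := fun i hi => (Finset.mem_filter.mp hi).2
  have hNmem : ∀ i ∈ N, lam i < 0 := fun i hi => (Finset.mem_filter.mp hi).2
  have hNne : N.Nonempty := by
    by_contra h
    rw [Finset.not_nonempty_iff_eq_empty] at h
    have hPuniv : P = Finset.univ := by rw [← hPN, h, Finset.union_empty]
    have : 0 < ∑ i, lam i := by
      rw [hsplit lam, h, Finset.sum_empty, add_zero]
      exact Finset.sum_pos hPmem (by rw [hPuniv]; exact Finset.univ_nonempty)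
    linarith [h1, this]
  have hPne : P.Nonempty := by
    by_contra h
    rw [Finset.not_nonempty_iff_eq_empty] at h
    have hNuniv : N = Finset.univ := by rw [← hPN, h, Finset.empty_union]
    have : ∑ i, lam i < 0 := by
      rw [hsplit lam, h, Finset.sum_empty, zero_add]
      exact Finset.sum_neg hNmem (by rw [hNuniv]; exact Finset.univ_nonempty)
    linarith [h1, this]
  have hNprodpos : 0 < ∏ i ∈ N, lam i := by
    have hP : 0 < ∏ i ∈ P, lam i := Finset.prod_pos hPmem
    by_contra h
    push_neg at h
    nlinarith [hprodsplit ▸ hd]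
  have hNeg : ∏ i ∈ N, lam i = (-1 : ℝ)^N.card * ∏ i ∈ N, (-lam i) := by
    rw [← Finset.prod_const, ← Finset.prod_mul_distrib]
    exact Finset.prod_congr rfl fun i _ => by ring
  have hNegpos : 0 < ∏ i ∈ N, (-lam i) :=
    Finset.prod_pos fun i hi => by linarith [hNmem i hi]
  have hNeven : Even N.card := by
    rcases Nat.even_or_odd N.card with h | h
    · exact h
    · exfalso
      rw [hNeg, Odd.neg_one_pow h] at hNprodpos
      nlinarith
  have hN4 : N.card ≠ 4 := by
    intro h4
    have hP1 : P.card = 1 := by omega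
    obtain ⟨i0, hi0⟩ := Finset.card_eq_one.mp hP1
    have hi0P : i0 ∈ P := by rw [hi0]; exact Finset.mem_singleton_self i0
    have ht : 0 < lam i0 := hPmem i0 hi0P
    have hsum1 : lam i0 + ∑ i ∈ N, lam i = 0 := by
      have := hsplit lam
      rw [hi0, Finset.sum_singleton] at this
      linarith [h1, this]
    have hsum3 : (lam i0)^3 + ∑ i ∈ N, (lam i)^3 = 0 := by
      have := hsplit (fun i => (lam i)^3)
      rw [hi0, Finset.sum_singleton] at this
      linarith [h3, this]
    have hmu1 : ∑ i ∈ N, (-lam i) = lam i0 := by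
      rw [Finset.sum_neg_distrib]
      linarith
    have hmu3 : ∑ i ∈ N, (-lam i)^3 = (lam i0)^3 := by
      have : ∑ i ∈ N, (-lam i)^3 = -∑ i ∈ N, (lam i)^3 := by
        rw [← Finset.sum_neg_distrib]
        exact Finset.sum_congr rfl fun i _ => by ring
      rw [this]
      linarith
    have := sum_cube_lt_cube_sum N (fun i => -lam i) (by omega)
      (fun i hi => show (0:ℝ) < -lam i by linarith [hNmem i hi])
    rw [hmu1, hmu3] at this
    exact lt_irrefl _ this
  have hN2 : N.card = 2 := by
    rcases hNeven with ⟨k, hk⟩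
    have h1' : 1 ≤ N.card := Finset.card_pos.mpr hNne
    have h2' : 1 ≤ P.card := Finset.card_pos.mpr hPne
    omega
  have hP3 : P.card = 3 := by omega
  constructor
  · rw [Fintype.card_subtype]; exact hP3
  · rw [Fintype.card_subtype]; exact hN2

/-- Every `5 × 5` real symmetric matrix whose support is exactly the adjacency pattern of
the 5-cycle (positive entries exactly on cycle edges, zero elsewhere) has exactly 3
positive eigenvalues and 2 negative eigenvalues. -/
theorem five_cycle_pattern_signature (A : Matrix (ZMod 5) (ZMod 5) ℝ) (hA : A.IsHermitian)
    (hpos : ∀ i j : ZMod 5, (j = i + 1 ∨ j = i - 1) → 0 < A i j)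
    (hzero : ∀ i j : ZMod 5, ¬(j = i + 1 ∨ j = i - 1) → A i j = 0) :
    Fintype.card {i : ZMod 5 // 0 < hA.eigenvalues i} = 3 ∧
    Fintype.card {i : ZMod 5 // hA.eigenvalues i < 0} = 2 := by
  -- Spectral data: trace, trace of the cube, and determinant in terms of eigenvalues.
  set U : Matrix (ZMod 5) (ZMod 5) ℝ := (hA.eigenvectorUnitary : Matrix (ZMod 5) (ZMod 5) ℝ)
    with hUdef
  have hU2 : star U * U = 1 := (Matrix.mem_unitaryGroup_iff').mp hA.eigenvectorUnitary.2
  set D : Matrix (ZMod 5) (ZMod 5) ℝ := Matrix.diagonal hA.eigenvalues with hD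
  have hspec : A = U * D * star U := by
    have h := hA.spectral_theorem
    rwa [RCLike.ofReal_real_eq_id, Function.id_comp] at h
  have hcancel : ∀ X : Matrix (ZMod 5) (ZMod 5) ℝ, star U * (U * X) = X := fun X => by
    rw [← Matrix.mul_assoc, hU2, Matrix.one_mul]
  have htr : Matrix.trace A = ∑ i, hA.eigenvalues i := by
    conv_lhs => rw [hspec]
    rw [Matrix.trace_mul_comm (U * D) (star U), ← Matrix.mul_assoc, hU2,
      Matrix.one_mul, hD, Matrix.trace_diagonal]
  have htr3 : Matrix.trace (A * A * A) = ∑ i, (hA.eigenvalues i)^3 := by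
    have h3 : A * A * A = U * (D * (D * D)) * star U := by
      conv_lhs => rw [hspec]
      simp only [Matrix.mul_assoc, hcancel]
    rw [h3, Matrix.trace_mul_comm (U * (D * (D * D))) (star U), ← Matrix.mul_assoc, hU2,
      Matrix.one_mul, hD, Matrix.diagonal_mul_diagonal, Matrix.diagonal_mul_diagonal,
      Matrix.trace_diagonal]
    exact Finset.sum_congr rfl fun i _ => by ring
  have hdet : Matrix.det A = ∏ i, hA.eigenvalues i := by
    rw [hA.det_eq_prod_eigenvalues]
    exact Finset.prod_congr rfl fun i _ => rfl
  -- The trace of `A` vanishes (zero diagonal) and so does the trace of `A³` (no triangles).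
  have hdiag : ∀ i : ZMod 5, ¬(i = i + 1 ∨ i = i - 1) := by decide
  have htri : ∀ i j k : ZMod 5, (j = i + 1 ∨ j = i - 1) → (k = j + 1 ∨ k = j - 1) →
      ¬(i = k + 1 ∨ i = k - 1) := by decide
  have htrace0 : Matrix.trace A = 0 :=
    Finset.sum_eq_zero fun i _ => hzero i i (hdiag i)
  have htrace30 : Matrix.trace (A * A * A) = 0 := by
    unfold Matrix.trace
    apply Finset.sum_eq_zero
    intro i _
    simp only [Matrix.diag_apply, Matrix.mul_apply, Finset.sum_mul]
    apply Finset.sum_eq_zero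
    intro j _
    apply Finset.sum_eq_zero
    intro k _
    by_cases h1 : (k = i + 1 ∨ k = i - 1)
    · by_cases h2 : (j = k + 1 ∨ j = k - 1)
      · rw [hzero j i (htri i k j h1 h2), mul_zero]
      · rw [hzero k j h2, mul_zero, zero_mul]
    · rw [hzero i k h1, zero_mul, zero_mul]
  -- The determinant is positive: the only contributing permutations are the two 5-cycles.
  have hdetpos : 0 < Matrix.det A := by
    have z1 : A 0 0 = 0 := hzero 0 0 (by decide)
    have z2 : A 0 2 = 0 := hzero 0 2 (by decide)
    have z3 : A 0 3 = 0 := hzero 0 3 (by decide)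
    have z4 : A 1 1 = 0 := hzero 1 1 (by decide)
    have z5 : A 1 3 = 0 := hzero 1 3 (by decide)
    have z6 : A 1 4 = 0 := hzero 1 4 (by decide)
    have z7 : A 2 0 = 0 := hzero 2 0 (by decide)
    have z8 : A 2 2 = 0 := hzero 2 2 (by decide)
    have z9 : A 2 4 = 0 := hzero 2 4 (by decide)
    have z10 : A 3 0 = 0 := hzero 3 0 (by decide)
    have z11 : A 3 1 = 0 := hzero 3 1 (by decide)
    have z12 : A 3 3 = 0 := hzero 3 3 (by decide)
    have z13 : A 4 1 = 0 := hzero 4 1 (by decide)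
    have z14 : A 4 2 = 0 := hzero 4 2 (by decide)
    have z15 : A 4 4 = 0 := hzero 4 4 (by decide)
    have hAB : A = (!![0, A 0 1, 0, 0, A 0 4;
        A 1 0, 0, A 1 2, 0, 0;
        0, A 2 1, 0, A 2 3, 0;
        0, 0, A 3 2, 0, A 3 4;
        A 4 0, 0, 0, A 4 3, 0] : Matrix (Fin 5) (Fin 5) ℝ) := by
      ext i j
      fin_cases i <;> fin_cases j <;> beta_reduce <;>
        first
          | rfl
          | exact z1 | exact z2 | exact z3 | exact z4 | exact z5
          | exact z6 | exact z7 | exact z8 | exact z9 | exact z10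
          | exact z11 | exact z12 | exact z13 | exact z14 | exact z15
    have key : ∀ a b c d e a' b' c' d' e' : ℝ,
        det !![0, a, 0, 0, e'; a', 0, b, 0, 0; 0, b', 0, c, 0; 0, 0, c', 0, d; e, 0, 0, d', 0]
          = a*b*c*d*e + a'*b'*c'*d'*e' := by
      intro a b c d e a' b' c' d' e'
      simp [det_succ_row_zero, Fin.sum_univ_succ, Fin.succAbove]
      ring
    rw [hAB]
    erw [key]
    have h01 := hpos 0 1 (by decide)
    have h12 := hpos 1 2 (by decide)
    have h23 := hpos 2 3 (by decide)
    have h34 := hpos 3 4 (by decide)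
    have h40 := hpos 4 0 (by decide)
    have h10 := hpos 1 0 (by decide)
    have h21 := hpos 2 1 (by decide)
    have h32 := hpos 3 2 (by decide)
    have h43 := hpos 4 3 (by decide)
    have h04 := hpos 0 4 (by decide)
    positivity
  -- Combine.
  have hs1 : ∑ i, hA.eigenvalues i = 0 := by rw [← htr]; exact htrace0
  have hs3 : ∑ i, (hA.eigenvalues i)^3 = 0 := by rw [← htr3]; exact htrace30
  have hpr : 0 < ∏ i, hA.eigenvalues i := by rw [← hdet]; exact hdetpos
  exact signature_of_sums hA.eigenvalues hs1 hs3 hpr
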